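/- Suppose the data matrices satisfy the noise-free consistency relation X₊ = AX + BU, the stacked matrix [X; U] ∈ ℝ^{(n+m)×N} has full row rank n+m, and there exists a symmetric P ∈ ℝ^{n×n} with M(P) ⪯ 0 (negative semidefinite). Then the system (A,B,C,D) is (Q,S,R)-dissipative, with quadratic storage function V(x) = xᵀPx. -/

import Mathlib

open Matrix

/-- `M ⪯ 0`: a real matrix is negative semidefinite iff `-M` is positive semidefinite. -/
def Matrix.NegSemidef {k : Type*} [Fintype k] (M : Matrix k k ℝ) : Prop :=
  (-M).PosSemidef

/-- Quadratic supply rate `s(u,y) = uᵀRu + uᵀSᵀy + yᵀSu + yᵀQy`. -/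
noncomputable def supplyRate {m p : ℕ} (R : Matrix (Fin m) (Fin m) ℝ)
    (S : Matrix (Fin p) (Fin m) ℝ) (Q : Matrix (Fin p) (Fin p) ℝ)
    (u : Fin m → ℝ) (y : Fin p → ℝ) : ℝ :=
  u ⬝ᵥ R.mulVec u + u ⬝ᵥ Sᵀ.mulVec y + y ⬝ᵥ S.mulVec u + y ⬝ᵥ Q.mulVec y

/-- The dissipation matrix `K(P)`. -/
noncomputable def dissipationMatrix {n m p : ℕ}
    (A : Matrix (Fin n) (Fin n) ℝ) (B : Matrix (Fin n) (Fin m) ℝ)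
    (C : Matrix (Fin p) (Fin n) ℝ) (D : Matrix (Fin p) (Fin m) ℝ)
    (R : Matrix (Fin m) (Fin m) ℝ) (S : Matrix (Fin p) (Fin m) ℝ)
    (Q : Matrix (Fin p) (Fin p) ℝ)
    (P : Matrix (Fin n) (Fin n) ℝ) : Matrix (Fin n ⊕ Fin m) (Fin n ⊕ Fin m) ℝ :=
  Matrix.fromBlocks
    (Aᵀ * P * A - P - Cᵀ * Q * C)
    (Aᵀ * P * B - (Cᵀ * S + Cᵀ * Q * D))
    (Aᵀ * P * B - (Cᵀ * S + Cᵀ * Q * D))ᵀ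
    (Bᵀ * P * B - (Dᵀ * Q * D + Dᵀ * S + Sᵀ * D + R))

/-- The data-dependent matrix `M(P)`. -/
noncomputable def dataMatrixM {n m p N : ℕ}
    (C : Matrix (Fin p) (Fin n) ℝ) (D : Matrix (Fin p) (Fin m) ℝ)
    (R : Matrix (Fin m) (Fin m) ℝ) (S : Matrix (Fin p) (Fin m) ℝ)
    (Q : Matrix (Fin p) (Fin p) ℝ)
    (X Xp : Matrix (Fin n) (Fin N) ℝ) (U : Matrix (Fin m) (Fin N) ℝ)
    (P : Matrix (Fin n) (Fin n) ℝ) : Matrix (Fin N) (Fin N) ℝ :=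
  Xpᵀ * P * Xp - Xᵀ * P * X -
    (Uᵀ * R * U + Uᵀ * Sᵀ * (C * X + D * U) + (C * X + D * U)ᵀ * S * U
      + (C * X + D * U)ᵀ * Q * (C * X + D * U))

theorem dataMatrix_lmi_and_full_rank_implies_dissipative {n m p N : ℕ}
    (A : Matrix (Fin n) (Fin n) ℝ) (B : Matrix (Fin n) (Fin m) ℝ)
    (C : Matrix (Fin p) (Fin n) ℝ) (D : Matrix (Fin p) (Fin m) ℝ)
    (R : Matrix (Fin m) (Fin m) ℝ) (S : Matrix (Fin p) (Fin m) ℝ)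
    (Q : Matrix (Fin p) (Fin p) ℝ) (hR : R.IsSymm) (hQ : Q.IsSymm)
    (X Xp : Matrix (Fin n) (Fin N) ℝ) (U : Matrix (Fin m) (Fin N) ℝ)
    (hdata : Xp = A * X + B * U)
    (hrank : (Matrix.fromRows X U).rank = n + m)
    (P : Matrix (Fin n) (Fin n) ℝ) (hP : P.IsSymm)
    (hM : (dataMatrixM C D R S Q X Xp U P).NegSemidef) :
    ∀ (u : ℕ → Fin m → ℝ) (x : ℕ → Fin n → ℝ),
      (∀ k : ℕ, x (k + 1) = A.mulVec (x k) + B.mulVec (u k)) →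
      ∀ k₂ k₁ : ℕ, k₂ < k₁ →
        (x k₁) ⬝ᵥ P.mulVec (x k₁) - (x k₂) ⬝ᵥ P.mulVec (x k₂)
          ≤ ∑ i ∈ Finset.Ico k₂ k₁,
              supplyRate R S Q (u i) (C.mulVec (x i) + D.mulVec (u i)) := by
  intro u x hx k₂ k₁ hk
  -- one-step dissipation inequality
  have hstep : ∀ xv : Fin n → ℝ, ∀ uv : Fin m → ℝ,
      (A *ᵥ xv + B *ᵥ uv) ⬝ᵥ P *ᵥ (A *ᵥ xv + B *ᵥ uv) - xv ⬝ᵥ P *ᵥ xv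
        ≤ supplyRate R S Q uv (C *ᵥ xv + D *ᵥ uv) := by
    intro xv uv
    -- surjectivity from full row rank
    obtain ⟨v, hv⟩ : ∃ v, (Matrix.fromRows X U) *ᵥ v = Sum.elim xv uv := by
      have h : LinearMap.range (Matrix.fromRows X U).mulVecLin = ⊤ := by
        apply Submodule.eq_top_of_finrank_eq
        rw [← Matrix.rank, hrank]
        simp [Module.finrank_pi]
      have hz : Sum.elim xv uv ∈ LinearMap.range (Matrix.fromRows X U).mulVecLin :=
        h ▸ Submodule.mem_top
      exact hz
    have hX : X *ᵥ v = xv := by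
      funext i; have := congrFun hv (Sum.inl i)
      simpa [Matrix.fromRows_mulVec] using this
    have hU : U *ᵥ v = uv := by
      funext i; have := congrFun hv (Sum.inr i)
      simpa [Matrix.fromRows_mulVec] using this
    have hXp : Xp *ᵥ v = A *ᵥ xv + B *ᵥ uv := by
      rw [hdata, add_mulVec, ← mulVec_mulVec, ← mulVec_mulVec, hX, hU]
    have hneg : v ⬝ᵥ (dataMatrixM C D R S Q X Xp U P) *ᵥ v ≤ 0 := by
      have := Matrix.PosSemidef.dotProduct_mulVec_nonneg hM v
      simp only [neg_mulVec, dotProduct_neg, star_trivial] at this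
      linarith
    have hid : v ⬝ᵥ (dataMatrixM C D R S Q X Xp U P) *ᵥ v =
        (Xp *ᵥ v) ⬝ᵥ P *ᵥ (Xp *ᵥ v) - (X *ᵥ v) ⬝ᵥ P *ᵥ (X *ᵥ v) -
        ((U *ᵥ v) ⬝ᵥ R *ᵥ (U *ᵥ v)
          + (U *ᵥ v) ⬝ᵥ Sᵀ *ᵥ (C *ᵥ (X *ᵥ v) + D *ᵥ (U *ᵥ v))
          + (C *ᵥ (X *ᵥ v) + D *ᵥ (U *ᵥ v)) ⬝ᵥ S *ᵥ (U *ᵥ v)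
          + (C *ᵥ (X *ᵥ v) + D *ᵥ (U *ᵥ v)) ⬝ᵥ Q *ᵥ (C *ᵥ (X *ᵥ v) + D *ᵥ (U *ᵥ v))) := by
      simp only [dataMatrixM, sub_mulVec, add_mulVec, dotProduct_sub, dotProduct_add,
        ← mulVec_mulVec, dotProduct_mulVec, vecMul_transpose, transpose_add, transpose_mul,
        mulVec_add, add_dotProduct, add_vecMul, vecMul_add]
    rw [hid, hX, hU, hXp] at hneg
    simp only [supplyRate]
    linarith
  -- telescoping
  induction k₁ with
  | zero => omega
  | succ k ih =>
    rcases Nat.lt_or_ge k₂ k with hlt | hge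
    · have h1 := ih hlt
      have h2 := hstep (x k) (u k)
      rw [Finset.sum_Ico_succ_top (le_of_lt hlt), ← hx k] at *
      rw [hx k] at h2
      rw [← hx k] at h2
      linarith
    · have hk2 : k₂ = k := by omega
      subst hk2
      have h2 := hstep (x k₂) (u k₂)
      rw [← hx k₂] at h2
      simpa using h2
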